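/- Let t be a nonnegative integer and n an integer with n ≥ max(8(t+1)^3, 40(t+2)). Let i be an integer with (2n−1)/(4π(t+2)) − 1 ≤ i ≤ (2n−1)(1 − 1/(4π(t+2))). Then for every θ in the interval [(4i+1)π/(4n−2), (4i+3)π/(4n−2)], the quantity n²·cos(nθ) − (n−1)²·cos((n−1)θ) + Σ_{j=1}^{t} 4·(−1)^{j+t} · j² · cos(2jθ) is nonzero. -/

import Mathlib

open Real

private lemma aux_sum_bound (t : ℕ) (θ : ℝ) :
    |∑ j ∈ Finset.Icc 1 t, 4*(-1:ℝ)^(j+t)*(j:ℝ)^2*Real.cos (2*(j:ℝ)*θ)| ≤ 4*(t:ℝ)^3 := by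
  have hT0 : (0:ℝ) ≤ (t:ℝ) := Nat.cast_nonneg t
  calc |∑ j ∈ Finset.Icc 1 t, 4*(-1:ℝ)^(j+t)*(j:ℝ)^2*Real.cos (2*(j:ℝ)*θ)|
      ≤ ∑ j ∈ Finset.Icc 1 t, |4*(-1:ℝ)^(j+t)*(j:ℝ)^2*Real.cos (2*(j:ℝ)*θ)| :=
        Finset.abs_sum_le_sum_abs _ _
    _ ≤ ∑ _j ∈ Finset.Icc 1 t, 4*(t:ℝ)^2 := by
        apply Finset.sum_le_sum
        intro j hj
        have hjT : (j:ℝ) ≤ (t:ℝ) := Nat.cast_le.mpr (Finset.mem_Icc.mp hj).2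
        have hj0 : (0:ℝ) ≤ (j:ℝ) := Nat.cast_nonneg j
        have h1 : |4*(-1:ℝ)^(j+t)*(j:ℝ)^2| = 4*(j:ℝ)^2 := by
          rw [abs_mul, abs_mul, abs_pow, abs_neg, abs_one, one_pow, mul_one]
          simp [abs_of_nonneg, sq_nonneg]
        rw [abs_mul, h1]
        nlinarith [abs_cos_le_one (2*(j:ℝ)*θ), abs_nonneg (Real.cos (2*(j:ℝ)*θ)),
          sq_nonneg (j:ℝ), mul_le_mul hjT hjT hj0 hT0]
    _ = (t:ℝ) * (4*(t:ℝ)^2) := by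
        rw [Finset.sum_const, Nat.card_Icc, nsmul_eq_mul]
        push_cast; ring
    _ ≤ 4*(t:ℝ)^3 := by nlinarith

private lemma aux_sin_quarter (i : ℤ) {x : ℝ} (h1 : (i:ℝ)*π + π/4 ≤ x)
    (h2 : x ≤ (i:ℝ)*π + 3*π/4) : 1/2 ≤ |Real.sin x| := by
  have hπ : (0:ℝ) < π := Real.pi_pos
  have hπ4 : π ≤ 4 := Real.pi_le_four
  have hkey : Real.sin x = (-1:ℝ)^i * Real.sin (x - (i:ℝ)*π) := by
    have h := Real.sin_add_int_mul_pi (x - (i:ℝ)*π) i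
    rw [show x - (i:ℝ)*π + (i:ℝ)*π = x by ring] at h
    rw [h]
  have habs1 : |(-1:ℝ)^i| = 1 := by
    rcases Int.even_or_odd i with he | ho
    · rw [he.neg_one_zpow, abs_one]
    · rw [ho.neg_one_zpow, abs_neg, abs_one]
  rw [hkey, abs_mul, habs1, one_mul]
  have hu1 : π/4 ≤ x - (i:ℝ)*π := by linarith
  have hu2 : x - (i:ℝ)*π ≤ 3*π/4 := by linarith
  have hsin : 1/2 ≤ Real.sin (x - (i:ℝ)*π) := by
    have he : Real.sin (x - (i:ℝ)*π) = Real.cos (π/2 - (x - (i:ℝ)*π)) :=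
      (Real.cos_pi_div_two_sub _).symm
    rw [he, ← Real.cos_abs]
    have h1 : |π/2 - (x - (i:ℝ)*π)| ≤ 1 := by
      rw [abs_le]; constructor <;> nlinarith
    have h2 := Real.one_sub_sq_div_two_le_cos (x := |π/2 - (x - (i:ℝ)*π)|)
    nlinarith [abs_nonneg (π/2 - (x - (i:ℝ)*π))]
  exact hsin.trans (le_abs_self _)

private lemma aux_sin_lb {T z : ℝ} (hT0 : 0 ≤ T) (hz1 : 1/(5*(T+2)) ≤ z)
    (hz2 : z ≤ π/2) : 1/(10*(T+2)) ≤ Real.sin z := by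
  have hπ : (0:ℝ) < π := Real.pi_pos
  have hπ4 : π ≤ 4 := Real.pi_le_four
  have hz0 : (0:ℝ) ≤ z := le_trans (by positivity) hz1
  have h := Real.mul_le_sin hz0 hz2
  have ha : (1:ℝ)/2 ≤ 2/π := by
    rw [div_le_div_iff₀ two_pos hπ]; linarith
  have hb := mul_le_mul ha hz1 (by positivity) (by positivity)
  have he : (1:ℝ)/2 * (1/(5*(T+2))) = 1/(10*(T+2)) := by
    have hTne : T + 2 ≠ 0 := by positivity
    field_simp
    ring
  linarith [he ▸ hb]

private lemma aux_final {m T : ℝ} (hT0 : 0 ≤ T) (hm : 39*(T+2) ≤ m) (hm3 : 8*T^3 ≤ m)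
    (hm0 : 0 < m) (h : m^2 ≤ (2*m + 4*T^3)*(10*(T+2))) : False := by
  nlinarith [mul_le_mul_of_nonneg_right hm hm0.le,
    mul_le_mul_of_nonneg_left hm3 (by linarith : (0:ℝ) ≤ T+2),
    mul_nonneg (mul_nonneg (mul_nonneg hT0 hT0) hT0) (by linarith : (0:ℝ) ≤ T+2)]

set_option maxHeartbeats 1000000 in
theorem stmt_14 (t : ℕ) (n : ℕ) (hn : max (8*(t+1)^3) (40*(t+2)) ≤ n) (i : ℤ)
    (hi₁ : (2*(n : ℝ) - 1) / (4*π*((t : ℝ) + 2)) - 1 ≤ (i : ℝ))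
    (hi₂ : (i : ℝ) ≤ (2*(n : ℝ) - 1) * (1 - 1 / (4*π*((t : ℝ) + 2)))) :
    ∀ θ ∈ Set.Icc ((4*(i : ℝ) + 1)*π / (4*(n : ℝ) - 2)) ((4*(i : ℝ) + 3)*π / (4*(n : ℝ) - 2)),
      (n : ℝ)^2 * cos (n * θ) - ((n : ℝ) - 1)^2 * cos (((n : ℝ) - 1) * θ) +
        ∑ j ∈ Finset.Icc 1 t, 4 * (-1 : ℝ)^(j + t) * (j : ℝ)^2 * cos (2*(j : ℝ) * θ) ≠ 0 := by
  intro θ hθ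
  obtain ⟨hθ1, hθ2⟩ := hθ
  have hπ : (0:ℝ) < π := Real.pi_pos
  have hπ4 : π ≤ 4 := Real.pi_le_four
  have hπ3 : (3:ℝ) < π := Real.pi_gt_three
  set T : ℝ := (t : ℝ) with hTdef
  have hT0 : (0:ℝ) ≤ T := Nat.cast_nonneg t
  -- n bounds over ℝ
  have hn1 : (40:ℝ)*(T+2) ≤ (n:ℝ) := by
    have h := (le_max_right (8*(t+1)^3) (40*(t+2))).trans hn
    have h2 : ((40*(t+2) : ℕ) : ℝ) ≤ (n:ℝ) := Nat.cast_le.mpr h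
    push_cast at h2
    rw [hTdef]; linarith
  have hn2 : (8:ℝ)*(T+1)^3 ≤ (n:ℝ) := by
    have h := (le_max_left (8*(t+1)^3) (40*(t+2))).trans hn
    have h2 : ((8*(t+1)^3 : ℕ) : ℝ) ≤ (n:ℝ) := Nat.cast_le.mpr h
    push_cast at h2
    rw [hTdef]; linarith
  set m : ℝ := (n:ℝ) - 1/2 with hmdef
  clear_value T m
  have hm : 39*(T+2) ≤ m := by rw [hmdef]; linarith
  have hm3 : 8*T^3 ≤ m := by
    rw [hmdef]; nlinarith [sq_nonneg T, hT0]
  have hm0 : (0:ℝ) < m := by nlinarith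
  have hd : (0:ℝ) < 4*(n:ℝ) - 2 := by linarith
  have hPT : π * T ≤ 4 * T := mul_le_mul_of_nonneg_right hπ4 hT0
  have hP4 : (0:ℝ) < 4*π*(T+2) := by positivity
  have hTpos : (0:ℝ) < T + 2 := by linarith
  -- clear denominators from hypotheses
  have hθ1' : (4*(i:ℝ)+1)*π ≤ θ * (4*(n:ℝ)-2) := (div_le_iff₀ hd).mp hθ1
  have hθ2' : θ * (4*(n:ℝ)-2) ≤ (4*(i:ℝ)+3)*π := (le_div_iff₀ hd).mp hθ2
  have hi1' : 2*(n:ℝ)-1 ≤ ((i:ℝ)+1) * (4*π*(T+2)) := by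
    have h : (2*(n:ℝ)-1)/(4*π*(T+2)) ≤ (i:ℝ)+1 := by linarith
    exact (div_le_iff₀ hP4).mp h
  have hi2' : (i:ℝ) * (4*π*(T+2)) ≤ (2*(n:ℝ)-1) * (4*π*(T+2)) - (2*(n:ℝ)-1) := by
    have h := mul_le_mul_of_nonneg_right hi₂ hP4.le
    have e : (2*(n:ℝ)-1) * (1 - 1/(4*π*(T+2))) * (4*π*(T+2))
        = (2*(n:ℝ)-1) * (4*π*(T+2)) - (2*(n:ℝ)-1) := by
      field_simp
    linarith [e ▸ h]
  -- m*θ is in [iπ + π/4, iπ + 3π/4]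
  have hmθ1 : (i:ℝ)*π + π/4 ≤ m*θ := by
    have h : ((i:ℝ)*π + π/4) * (4*(n:ℝ)-2) ≤ (m*θ) * (4*(n:ℝ)-2) := by
      have h2 := mul_le_mul_of_nonneg_right hθ1' hm0.le
      rw [hmdef] at h2 ⊢
      nlinarith [h2]
    exact (mul_le_mul_iff_left₀ hd).mp h
  have hmθ2 : m*θ ≤ (i:ℝ)*π + 3*π/4 := by
    have h : (m*θ) * (4*(n:ℝ)-2) ≤ ((i:ℝ)*π + 3*π/4) * (4*(n:ℝ)-2) := by
      have h2 := mul_le_mul_of_nonneg_right hθ2' hm0.le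
      rw [hmdef] at h2 ⊢
      nlinarith [h2]
    exact (mul_le_mul_iff_left₀ hd).mp h
  have hS : 1/2 ≤ |Real.sin (m*θ)| := aux_sin_quarter i hmθ1 hmθ2
  -- θ(T+2) bounds
  have hcore : 3*π*(T+2) ≤ (1/5)*(2*(n:ℝ)-1) := by linarith
  have hθ1T := mul_le_mul_of_nonneg_right hθ1' hTpos.le
  have hθ2T := mul_le_mul_of_nonneg_right hθ2' hTpos.le
  have hθT1 : 2/5 ≤ θ*(T+2) := by
    have hstep : 2/5 * (4*(n:ℝ)-2) ≤ θ*(T+2) * (4*(n:ℝ)-2) := by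
      nlinarith [hθ1T, hi1', hcore]
    exact (mul_le_mul_iff_left₀ hd).mp hstep
  have hθT2 : θ*(T+2) ≤ 2*π*(T+2) - 2/5 := by
    have hstep : θ*(T+2) * (4*(n:ℝ)-2) ≤ (2*π*(T+2) - 2/5) * (4*(n:ℝ)-2) := by
      nlinarith [hθ2T, hi2', hcore]
    exact (mul_le_mul_iff_left₀ hd).mp hstep
  -- sin(θ/2) lower bound
  have hy1 : 1/(5*(T+2)) ≤ θ/2 := by
    rw [div_le_iff₀ (by positivity : (0:ℝ) < 5*(T+2))]
    nlinarith [hθT1]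
  have hy2 : θ/2 ≤ π - 1/(5*(T+2)) := by
    have h : θ/2 * (5*(T+2)) ≤ (π - 1/(5*(T+2))) * (5*(T+2)) := by
      have e : (π - 1/(5*(T+2))) * (5*(T+2)) = π*(5*(T+2)) - 1 := by
        field_simp
      rw [e]; nlinarith [hθT2]
    exact (mul_le_mul_iff_left₀ (by positivity : (0:ℝ) < 5*(T+2))).mp h
  have hs : 1/(10*(T+2)) ≤ Real.sin (θ/2) := by
    rcases le_or_gt (θ/2) (π/2) with hc | hc
    · exact aux_sin_lb hT0 hy1 hc
    · have h := aux_sin_lb hT0 (show 1/(5*(T+2)) ≤ π - θ/2 by linarith)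
        (show π - θ/2 ≤ π/2 by linarith)
      rwa [Real.sin_pi_sub] at h
  have hspos : (0:ℝ) < Real.sin (θ/2) := lt_of_lt_of_le (by positivity) hs
  -- the identity
  have hiden : (n:ℝ)^2 * cos ((n:ℝ)*θ) - ((n:ℝ)-1)^2 * cos (((n:ℝ)-1)*θ)
      = 2*m*(Real.cos (m*θ)*Real.cos (θ/2)) - (2*m^2+1/2)*(Real.sin (m*θ)*Real.sin (θ/2)) := by
    rw [show (n:ℝ)*θ = m*θ + θ/2 by rw [hmdef]; ring,
        show ((n:ℝ)-1)*θ = m*θ - θ/2 by rw [hmdef]; ring,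
        Real.cos_add, Real.cos_sub, hmdef]
    ring
  have hSum := aux_sum_bound t θ
  rw [← hTdef] at hSum
  -- cosine term bound
  have hCc : |2*m*(Real.cos (m*θ)*Real.cos (θ/2))| ≤ 2*m := by
    rw [abs_mul, abs_of_pos (by positivity : (0:ℝ) < 2*m), abs_mul]
    nlinarith [abs_cos_le_one (m*θ), abs_cos_le_one (θ/2), abs_nonneg (Real.cos (m*θ)),
      abs_nonneg (Real.cos (θ/2)),
      mul_le_one₀ (abs_cos_le_one (m*θ)) (abs_nonneg (Real.cos (θ/2))) (abs_cos_le_one (θ/2))]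
  -- main term lower bound
  have hLHS : m^2 * (1/(10*(T+2))) ≤ |(2*m^2+1/2)*(Real.sin (m*θ)*Real.sin (θ/2))| := by
    rw [abs_mul, abs_of_pos (by positivity : (0:ℝ) < 2*m^2+1/2), abs_mul,
      abs_of_pos hspos]
    have hstep := mul_le_mul hS hs (by positivity) (abs_nonneg _)
    nlinarith [hstep, sq_nonneg m, mul_le_mul_of_nonneg_left hstep
      (by positivity : (0:ℝ) ≤ 2*m^2+1/2), (by positivity : (0:ℝ) < 1/(10*(T+2)))]
  -- conclude
  intro hE
  rw [hiden] at hE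
  have hEq : (2*m^2+1/2)*(Real.sin (m*θ)*Real.sin (θ/2))
      = 2*m*(Real.cos (m*θ)*Real.cos (θ/2))
        + ∑ j ∈ Finset.Icc 1 t, 4*(-1:ℝ)^(j+t)*(j:ℝ)^2*Real.cos (2*(j:ℝ)*θ) := by
    linarith [hE]
  have habs : |(2*m^2+1/2)*(Real.sin (m*θ)*Real.sin (θ/2))| ≤ 2*m + 4*T^3 := by
    rw [hEq]
    calc |2*m*(Real.cos (m*θ)*Real.cos (θ/2))
          + ∑ j ∈ Finset.Icc 1 t, 4*(-1:ℝ)^(j+t)*(j:ℝ)^2*Real.cos (2*(j:ℝ)*θ)|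
        ≤ |2*m*(Real.cos (m*θ)*Real.cos (θ/2))|
          + |∑ j ∈ Finset.Icc 1 t, 4*(-1:ℝ)^(j+t)*(j:ℝ)^2*Real.cos (2*(j:ℝ)*θ)| :=
          abs_add_le _ _
      _ ≤ 2*m + 4*T^3 := add_le_add hCc hSum
  have hfinal : m^2 * (1/(10*(T+2))) ≤ 2*m + 4*T^3 := hLHS.trans habs
  have hfinal' : m^2 ≤ (2*m + 4*T^3) * (10*(T+2)) := by
    have h10 : (0:ℝ) < 10*(T+2) := by positivity
    have h := mul_le_mul_of_nonneg_right hfinal h10.le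
    have e : m^2*(1/(10*(T+2)))*(10*(T+2)) = m^2 := by
      have hTne : T + 2 ≠ 0 := by positivity
      field_simp
    linarith [e ▸ h]
  exact aux_final hT0 hm hm3 hm0 hfinal'
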